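/- Let T ∈ A⊗B⊗C be a concise tensor of border rank m = dim A = dim B = dim C (minimal border rank). Then dim((T(A*)⊗A) ∩ (T(B*)⊗B) ∩ (T(C*)⊗C)) ≥ m, where the intersection is taken inside A⊗B⊗C (identifying T(A*)⊗A ⊆ B⊗C⊗A ≅ A⊗B⊗C etc.). -/

import Mathlib

/-- The linear map `End(A) → A⊗B⊗C`, `X ↦ X ∘_A T`, whose image is
`T(A*) ⊗ A` (viewed inside `A⊗B⊗C`). -/
noncomputable def phiA {m : ℕ} (T : Fin m → Fin m → Fin m → ℂ) :
    Matrix (Fin m) (Fin m) ℂ →ₗ[ℂ] (Fin m → Fin m → Fin m → ℂ) where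
  toFun X := fun i j k => ∑ i', X i i' * T i' j k
  map_add' X Y := by funext i j k; simp [add_mul, Finset.sum_add_distrib]
  map_smul' c X := by
    funext i j k
    simp [Matrix.smul_apply, smul_eq_mul, Finset.mul_sum, mul_assoc]

/-- The linear map `End(B) → A⊗B⊗C`, `Y ↦ Y ∘_B T`, whose image is `T(B*) ⊗ B`. -/
noncomputable def phiB {m : ℕ} (T : Fin m → Fin m → Fin m → ℂ) :
    Matrix (Fin m) (Fin m) ℂ →ₗ[ℂ] (Fin m → Fin m → Fin m → ℂ) where
  toFun Y := fun i j k => ∑ j', Y j j' * T i j' k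
  map_add' X Y := by funext i j k; simp [add_mul, Finset.sum_add_distrib]
  map_smul' c X := by
    funext i j k
    simp [Matrix.smul_apply, smul_eq_mul, Finset.mul_sum, mul_assoc]

/-- The linear map `End(C) → A⊗B⊗C`, `Z ↦ Z ∘_C T`, whose image is `T(C*) ⊗ C`. -/
noncomputable def phiC {m : ℕ} (T : Fin m → Fin m → Fin m → ℂ) :
    Matrix (Fin m) (Fin m) ℂ →ₗ[ℂ] (Fin m → Fin m → Fin m → ℂ) where
  toFun Z := fun i j k => ∑ k', Z k k' * T i j k'
  map_add' X Y := by funext i j k; simp [add_mul, Finset.sum_add_distrib]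
  map_smul' c X := by
    funext i j k
    simp [Matrix.smul_apply, smul_eq_mul, Finset.mul_sum, mul_assoc]

/-- `T` is concise: all three flattenings are injective. -/
def Concise {m : ℕ} (T : Fin m → Fin m → Fin m → ℂ) : Prop :=
  Function.Injective (fun (α : Fin m → ℂ) => fun j k => ∑ i, α i * T i j k) ∧
  Function.Injective (fun (β : Fin m → ℂ) => fun i k => ∑ j, β j * T i j k) ∧
  Function.Injective (fun (γ : Fin m → ℂ) => fun i j => ∑ k, γ k * T i j k)

/-- Tensors of rank at most `r`. -/
def rankAtMost (m r : ℕ) : Set (Fin m → Fin m → Fin m → ℂ) :=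
  {S | ∃ (u v w : Fin r → Fin m → ℂ),
    S = fun i j k => ∑ l, u l i * v l j * w l k}

namespace Eq111
variable {m : ℕ}
open Finset
abbrev Tens (m : ℕ) := Fin m → Fin m → Fin m → ℂ
abbrev Esp (m : ℕ) := EuclideanSpace ℂ (Fin 3 × Fin m × Fin m)

noncomputable def Phi (S : Tens m) : Esp m →ₗ[ℂ] Tens m × Tens m where
  toFun x := (fun i j k => (∑ i', x (0,i,i') * S i' j k) - ∑ j', x (1,j,j') * S i j' k,
              fun i j k => (∑ j', x (1,j,j') * S i j' k) - ∑ k', x (2,k,k') * S i j k')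
  map_add' x y := by
    refine Prod.ext ?_ ?_ <;> funext i j k <;>
      simp [PiLp.add_apply, add_mul, Finset.sum_add_distrib] <;> ring
  map_smul' c x := by
    refine Prod.ext ?_ ?_ <;> funext i j k <;>
      simp [PiLp.smul_apply, smul_eq_mul, Finset.mul_sum, mul_assoc, mul_sub]

noncomputable def Xof : Esp m →ₗ[ℂ] Matrix (Fin m) (Fin m) ℂ where
  toFun x := fun i i' => x (0, i, i')
  map_add' x y := by funext i i'; simp [PiLp.add_apply, Matrix.add_apply]; rfl
  map_smul' c x := by funext i i'; simp [PiLp.smul_apply, Matrix.smul_apply]; rfl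

noncomputable def Yof : Esp m →ₗ[ℂ] Matrix (Fin m) (Fin m) ℂ where
  toFun x := fun i i' => x (1, i, i')
  map_add' x y := by funext i i'; simp [PiLp.add_apply, Matrix.add_apply]; rfl
  map_smul' c x := by funext i i'; simp [PiLp.smul_apply, Matrix.smul_apply]; rfl

noncomputable def Zof : Esp m →ₗ[ℂ] Matrix (Fin m) (Fin m) ℂ where
  toFun x := fun i i' => x (2, i, i')
  map_add' x y := by funext i i'; simp [PiLp.add_apply, Matrix.add_apply]; rfl
  map_smul' c x := by funext i i'; simp [PiLp.smul_apply, Matrix.smul_apply]; rfl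

lemma phiA_injective {T : Tens m} (hc : Concise T) : Function.Injective (phiA T) := by
  rw [injective_iff_map_eq_zero]
  intro X hX
  funext i
  refine hc.1 ?_
  funext j k
  have h1 : (phiA T X) i j k = 0 := by rw [hX]; simp
  simpa [phiA] using h1

lemma phiB_injective {T : Tens m} (hc : Concise T) : Function.Injective (phiB T) := by
  rw [injective_iff_map_eq_zero]
  intro X hX
  funext j
  refine hc.2.1 ?_
  funext i k
  have h1 : (phiB T X) i j k = 0 := by rw [hX]; simp
  simpa [phiB] using h1

lemma phiC_injective {T : Tens m} (hc : Concise T) : Function.Injective (phiC T) := by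
  rw [injective_iff_map_eq_zero]
  intro X hX
  funext k
  refine hc.2.2 ?_
  funext i j
  have h1 : (phiC T X) i j k = 0 := by rw [hX]; simp
  simpa [phiC] using h1

lemma mem_ker_iff {T : Tens m} {x : Esp m} :
    x ∈ LinearMap.ker (Phi T) ↔
      phiA T (Xof x) = phiB T (Yof x) ∧ phiB T (Yof x) = phiC T (Zof x) := by
  constructor
  · intro hx
    have h := LinearMap.mem_ker.mp hx
    have h1 := congrArg Prod.fst h
    have h2 := congrArg Prod.snd h
    constructor
    · funext i j k
      have := congrFun (congrFun (congrFun h1 i) j) k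
      simp [Phi, phiA, phiB, Xof, Yof, sub_eq_zero] at this; exact this
    · funext i j k
      have := congrFun (congrFun (congrFun h2 i) j) k
      simp [Phi, phiB, phiC, Yof, Zof, sub_eq_zero] at this; exact this
  · intro ⟨h1, h2⟩
    refine LinearMap.mem_ker.mpr (Prod.ext ?_ ?_)
    · funext i j k
      have := congrFun (congrFun (congrFun h1 i) j) k
      simp only [phiA, phiB, Xof, Yof, LinearMap.coe_mk, AddHom.coe_mk] at this
      simp [Phi, sub_eq_zero]; exact this
    · funext i j k
      have := congrFun (congrFun (congrFun h2 i) j) k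
      simp only [phiB, phiC, Yof, Zof, LinearMap.coe_mk, AddHom.coe_mk] at this
      simp [Phi, sub_eq_zero]; exact this

lemma stepA {T : Tens m} (hc : Concise T) :
    Module.finrank ℂ ↥(LinearMap.ker (Phi T)) ≤ Module.finrank ℂ
      ↥(LinearMap.range (phiA T) ⊓ LinearMap.range (phiB T) ⊓
        LinearMap.range (phiC T)) := by
  set K := LinearMap.ker (Phi T)
  have hmem : ∀ x : K, phiA T (Xof x.1) ∈
      (LinearMap.range (phiA T) ⊓ LinearMap.range (phiB T) ⊓ LinearMap.range (phiC T)) := by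
    intro ⟨x, hx⟩
    obtain ⟨h1, h2⟩ := mem_ker_iff.mp hx
    refine ⟨⟨⟨Xof x, rfl⟩, ⟨Yof x, h1.symm⟩⟩, ⟨Zof x, (h1.trans h2).symm⟩⟩
  let f : K →ₗ[ℂ] ↥(LinearMap.range (phiA T) ⊓ LinearMap.range (phiB T) ⊓
        LinearMap.range (phiC T)) :=
    LinearMap.codRestrict _ ((phiA T).comp (Xof.comp K.subtype)) hmem
  have hinj : Function.Injective f := by
    intro ⟨x, hx⟩ ⟨y, hy⟩ hxy
    have hval : phiA T (Xof x) = phiA T (Xof y) := congrArg Subtype.val hxy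
    obtain ⟨hx1, hx2⟩ := mem_ker_iff.mp hx
    obtain ⟨hy1, hy2⟩ := mem_ker_iff.mp hy
    have hX : Xof x = Xof y := phiA_injective hc hval
    have hY : Yof x = Yof y := phiB_injective hc (by rw [← hx1, ← hy1, hX])
    have hZ : Zof x = Zof y := phiC_injective hc (by rw [← hx2, ← hy2, ← hx1, ← hy1, hX])
    refine Subtype.ext ?_
    refine PiLp.ext fun p => ?_
    obtain ⟨s, i, i'⟩ := p
    fin_cases s
    · exact congrFun (congrFun hX i) i'
    · exact congrFun (congrFun hY i) i'
    · exact congrFun (congrFun hZ i) i'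
  exact LinearMap.finrank_le_finrank_of_injective hinj

lemma contract (M : Matrix (Fin m) (Fin m) ℂ) (h : IsUnit M.det) (c d : Fin m → ℂ) :
    ∑ i', (∑ l, c l * M⁻¹ l i') * (∑ p, M i' p * d p) = ∑ l, c l * d l := by
  have hM : M⁻¹ * M = 1 := Matrix.nonsing_inv_mul M h
  calc ∑ i', (∑ l, c l * M⁻¹ l i') * (∑ p, M i' p * d p)
      = dotProduct (Matrix.vecMul c M⁻¹) (M.mulVec d) := rfl
    _ = dotProduct c (M⁻¹.mulVec (M.mulVec d)) :=
        (Matrix.dotProduct_mulVec c M⁻¹ (M.mulVec d)).symm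
    _ = dotProduct c d := by rw [Matrix.mulVec_mulVec, hM, Matrix.one_mulVec]
    _ = ∑ l, c l * d l := rfl

noncomputable def Lmap (U V W : Matrix (Fin m) (Fin m) ℂ) : (Fin m → ℂ) →ₗ[ℂ] Esp m where
  toFun t := WithLp.toLp 2 fun p : Fin 3 × Fin m × Fin m =>
    if p.1 = 0 then ∑ l, t l * (U p.2.1 l * U⁻¹ l p.2.2)
    else if p.1 = 1 then ∑ l, t l * (V p.2.1 l * V⁻¹ l p.2.2)
    else ∑ l, t l * (W p.2.1 l * W⁻¹ l p.2.2)
  map_add' t s := by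
    refine PiLp.ext fun p => ?_
    simp only [PiLp.add_apply, Pi.add_apply]
    split_ifs <;> simp [add_mul, Finset.sum_add_distrib]
  map_smul' c t := by
    refine PiLp.ext fun p => ?_
    simp only [PiLp.smul_apply, Pi.smul_apply, smul_eq_mul, RingHom.id_apply]
    split_ifs <;> simp [Finset.mul_sum, mul_assoc]

lemma Lmap_injective {U V W : Matrix (Fin m) (Fin m) ℂ} (hU : IsUnit U.det) :
    Function.Injective (Lmap U V W) := by
  rw [injective_iff_map_eq_zero]
  intro t ht
  have h0 : ∀ i i' : Fin m, ∑ l, t l * (U i l * U⁻¹ l i') = 0 := by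
    intro i i'
    have := congrArg (fun x : Esp m => x (0, i, i')) ht
    simpa [Lmap] using this
  have hmat : U * Matrix.diagonal t * U⁻¹ = 0 := by
    ext i i'
    have : (U * Matrix.diagonal t * U⁻¹) i i' = ∑ l, (U i l * t l) * U⁻¹ l i' := by
      simp [Matrix.mul_apply, Matrix.diagonal_apply, mul_ite, mul_zero, Finset.sum_ite_eq,
        Finset.sum_ite_eq']
    rw [this]
    simpa [mul_comm, mul_assoc, mul_left_comm] using h0 i i'
  have hd : Matrix.diagonal t = 0 := by
    have h1 : U⁻¹ * (U * Matrix.diagonal t * U⁻¹) * U = Matrix.diagonal t := by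
      rw [show U * Matrix.diagonal t * U⁻¹ = U * (Matrix.diagonal t * U⁻¹) from
        Matrix.mul_assoc _ _ _]
      rw [← Matrix.mul_assoc U⁻¹ U _, Matrix.nonsing_inv_mul U hU, Matrix.one_mul,
        Matrix.mul_assoc, Matrix.nonsing_inv_mul U hU, Matrix.mul_one]
    rw [← h1, hmat]
    simp
  funext q
  have := congrFun (congrFun hd q) q
  simpa [Matrix.diagonal_apply_eq] using this

lemma stepB {u v w : Fin m → Fin m → ℂ}
    (hU : IsUnit (Matrix.of fun i l => u l i).det)
    (hV : IsUnit (Matrix.of fun j l => v l j).det)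
    (hW : IsUnit (Matrix.of fun k l => w l k).det) :
    m ≤ Module.finrank ℂ
      ↥(LinearMap.ker (Phi (fun i j k => ∑ l, u l i * v l j * w l k))) := by
  set U : Matrix (Fin m) (Fin m) ℂ := Matrix.of fun i l => u l i with hUdef
  set V : Matrix (Fin m) (Fin m) ℂ := Matrix.of fun j l => v l j with hVdef
  set W : Matrix (Fin m) (Fin m) ℂ := Matrix.of fun k l => w l k with hWdef
  set S : Tens m := (fun i j k => ∑ l, u l i * v l j * w l k) with hSdef
  have hA : ∀ (t : Fin m → ℂ) (i j k : Fin m),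
      ∑ i', (∑ l, t l * (U i l * U⁻¹ l i')) * S i' j k
        = ∑ l, t l * (u l i * (v l j * w l k)) := by
    intro t i j k
    calc ∑ i', (∑ l, t l * (U i l * U⁻¹ l i')) * S i' j k
        = ∑ i', (∑ l, (t l * U i l) * U⁻¹ l i') * (∑ p, U i' p * (v p j * w p k)) := by
          refine Finset.sum_congr rfl fun i' _ => ?_
          congr 1
          · exact Finset.sum_congr rfl fun l _ => (mul_assoc _ _ _).symm
          · exact Finset.sum_congr rfl fun p _ => (mul_assoc _ _ _)
      _ = ∑ l, (t l * U i l) * (v l j * w l k) :=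
          contract U hU (fun l => t l * U i l) (fun p => v p j * w p k)
      _ = ∑ l, t l * (u l i * (v l j * w l k)) := by
          refine Finset.sum_congr rfl fun l _ => ?_
          show (t l * U i l) * (v l j * w l k) = _
          rw [show U i l = u l i from rfl]; ring
  have hB : ∀ (t : Fin m → ℂ) (i j k : Fin m),
      ∑ j', (∑ l, t l * (V j l * V⁻¹ l j')) * S i j' k
        = ∑ l, t l * (u l i * (v l j * w l k)) := by
    intro t i j k
    calc ∑ j', (∑ l, t l * (V j l * V⁻¹ l j')) * S i j' k
        = ∑ j', (∑ l, (t l * V j l) * V⁻¹ l j') * (∑ p, V j' p * (u p i * w p k)) := by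
          refine Finset.sum_congr rfl fun j' _ => ?_
          congr 1
          · exact Finset.sum_congr rfl fun l _ => (mul_assoc _ _ _).symm
          · refine Finset.sum_congr rfl fun p _ => ?_
            show u p i * v p j' * w p k = v p j' * (u p i * w p k); ring
      _ = ∑ l, (t l * V j l) * (u l i * w l k) :=
          contract V hV (fun l => t l * V j l) (fun p => u p i * w p k)
      _ = ∑ l, t l * (u l i * (v l j * w l k)) := by
          refine Finset.sum_congr rfl fun l _ => ?_
          show (t l * V j l) * (u l i * w l k) = _
          rw [show V j l = v l j from rfl]; ring
  have hC : ∀ (t : Fin m → ℂ) (i j k : Fin m),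
      ∑ k', (∑ l, t l * (W k l * W⁻¹ l k')) * S i j k'
        = ∑ l, t l * (u l i * (v l j * w l k)) := by
    intro t i j k
    calc ∑ k', (∑ l, t l * (W k l * W⁻¹ l k')) * S i j k'
        = ∑ k', (∑ l, (t l * W k l) * W⁻¹ l k') * (∑ p, W k' p * (u p i * v p j)) := by
          refine Finset.sum_congr rfl fun k' _ => ?_
          congr 1
          · exact Finset.sum_congr rfl fun l _ => (mul_assoc _ _ _).symm
          · refine Finset.sum_congr rfl fun p _ => ?_
            show u p i * v p j * w p k' = w p k' * (u p i * v p j); ring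
      _ = ∑ l, (t l * W k l) * (u l i * v l j) :=
          contract W hW (fun l => t l * W k l) (fun p => u p i * v p j)
      _ = ∑ l, t l * (u l i * (v l j * w l k)) := by
          refine Finset.sum_congr rfl fun l _ => ?_
          show (t l * W k l) * (u l i * v l j) = _
          rw [show W k l = w l k from rfl]; ring
  have hker : ∀ t, Lmap U V W t ∈ LinearMap.ker (Phi S) := by
    intro t
    refine LinearMap.mem_ker.mpr (Prod.ext ?_ ?_)
    · funext i j k
      show (∑ i', Lmap U V W t (0,i,i') * S i' j k)
          - (∑ j', Lmap U V W t (1,j,j') * S i j' k) = 0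
      have e0 : ∀ i i' : Fin m, Lmap U V W t (0,i,i') = ∑ l, t l * (U i l * U⁻¹ l i') := by
        intro i i'; simp [Lmap]
      have e1 : ∀ j j' : Fin m, Lmap U V W t (1,j,j') = ∑ l, t l * (V j l * V⁻¹ l j') := by
        intro j j'; simp [Lmap]
      simp only [e0, e1]
      rw [hA t i j k, hB t i j k, sub_self]
    · funext i j k
      show (∑ j', Lmap U V W t (1,j,j') * S i j' k)
          - (∑ k', Lmap U V W t (2,k,k') * S i j k') = 0
      have e1 : ∀ j j' : Fin m, Lmap U V W t (1,j,j') = ∑ l, t l * (V j l * V⁻¹ l j') := by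
        intro j j'; simp [Lmap]
      have e2 : ∀ k k' : Fin m, Lmap U V W t (2,k,k') = ∑ l, t l * (W k l * W⁻¹ l k') := by
        intro k k'; simp [Lmap]
      simp only [e1, e2]
      rw [hB t i j k, hC t i j k, sub_self]
  let f := (Lmap U V W).codRestrict (LinearMap.ker (Phi S)) hker
  have hinj : Function.Injective f := by
    intro a b hab
    exact Lmap_injective hU (congrArg Subtype.val hab)
  have hle := LinearMap.finrank_le_finrank_of_injective (f := f) hinj
  rwa [Module.finrank_fin_fun] at hle


def Good (m : ℕ) : Set (Tens m) :=
  {S | ∃ u v w : Fin m → Fin m → ℂ,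
    IsUnit (Matrix.of fun i l => u l i).det ∧
    IsUnit (Matrix.of fun j l => v l j).det ∧
    IsUnit (Matrix.of fun k l => w l k).det ∧
    S = fun i j k => ∑ l, u l i * v l j * w l k}

lemma det_perturb (A : Matrix (Fin m) (Fin m) ℂ) (t : ℂ) :
    ((-A).charpoly).eval t = (A + t • 1).det := by
  have h1 : ((-A).charpoly).eval t
      = ((Matrix.charmatrix (-A)).map (Polynomial.eval t)).det := by
    rw [Matrix.charpoly]
    exact RingHom.map_det (Polynomial.evalRingHom t) _
  rw [h1]
  congr 1
  ext i j
  by_cases hij : i = j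
  · subst hij
    simp [Matrix.charmatrix_apply_eq, Matrix.one_apply_eq]
    ring
  · simp [Matrix.charmatrix_apply_ne _ _ _ hij, Matrix.one_apply_ne hij]

lemma ball_infinite {δ : ℝ} (hδ : 0 < δ) : {z : ℂ | ‖z‖ < δ}.Infinite := by
  refine Set.infinite_of_injective_forall_mem
    (f := fun k : ℕ => ((δ / ((k : ℝ) + 2) : ℝ) : ℂ)) ?_ ?_
  · intro a b hab
    have h : δ / ((a : ℝ) + 2) = δ / ((b : ℝ) + 2) := Complex.ofReal_injective hab
    have d1 : ((a : ℝ) + 2) ≠ 0 := by positivity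
    have d2 : ((b : ℝ) + 2) ≠ 0 := by positivity
    rw [div_eq_div_iff d1 d2] at h
    have h2 : (a : ℝ) = (b : ℝ) := by
      have := mul_left_cancel₀ hδ.ne' (by linarith : δ * ((b : ℝ) + 2) = δ * ((a : ℝ) + 2))
      linarith
    exact_mod_cast h2
  · intro k
    simp only [Set.mem_setOf_eq, Complex.norm_real, Real.norm_eq_abs]
    rw [abs_of_pos (by positivity)]
    rw [div_lt_iff₀ (by positivity)]
    nlinarith [hδ, (by positivity : (0:ℝ) < (k:ℝ) + 2)]

lemma rankAtMost_subset_closure_good : rankAtMost m m ⊆ closure (Good m) := by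
  rintro S ⟨u, v, w, rfl⟩
  -- perturbed parameters
  set pu : ℂ → Fin m → Fin m → ℂ :=
    fun t l i => u l i + t * (if i = l then 1 else 0) with hpu
  set pv : ℂ → Fin m → Fin m → ℂ :=
    fun t l j => v l j + t * (if j = l then 1 else 0) with hpv
  set pw : ℂ → Fin m → Fin m → ℂ :=
    fun t l k => w l k + t * (if k = l then 1 else 0) with hpw
  have hmat : ∀ (a : Fin m → Fin m → ℂ) (t : ℂ),
      (Matrix.of fun i l => a l i + t * (if i = l then 1 else 0))
        = (Matrix.of fun i l => a l i) + t • 1 := by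
    intro a t
    ext i l
    simp [Matrix.one_apply]
  -- the three polynomials
  set p1 := (-(Matrix.of fun i l => u l i)).charpoly with hp1
  set p2 := (-(Matrix.of fun j l => v l j)).charpoly with hp2
  set p3 := (-(Matrix.of fun k l => w l k)).charpoly with hp3
  have hbad : ({x | p1.IsRoot x} ∪ {x | p2.IsRoot x} ∪ {x | p3.IsRoot x}).Finite := by
    refine (Set.Finite.union (Set.Finite.union ?_ ?_) ?_) <;>
      exact Polynomial.finite_setOf_isRoot (Matrix.charpoly_monic _).ne_zero
  -- choose t n
  have hchoice : ∀ n : ℕ, ∃ t : ℂ, ‖t‖ < 1 / (n + 1) ∧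
      ¬ p1.IsRoot t ∧ ¬ p2.IsRoot t ∧ ¬ p3.IsRoot t := by
    intro n
    have hpos : (0 : ℝ) < 1 / (n + 1) := by positivity
    have hinf := (ball_infinite hpos).diff hbad
    obtain ⟨t, ht⟩ := hinf.nonempty
    refine ⟨t, ht.1, ?_, ?_, ?_⟩ <;> intro hr <;>
      exact ht.2 (by simp [hr]; tauto)
  choose ts hts hr1 hr2 hr3 using hchoice
  have htend : Filter.Tendsto ts Filter.atTop (nhds 0) := by
    apply squeeze_zero_norm (fun n => (hts n).le)
    exact tendsto_one_div_add_atTop_nhds_zero_nat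
  -- membership in Good
  have hgood : ∀ n, (fun i j k => ∑ l, pu (ts n) l i * pv (ts n) l j * pw (ts n) l k)
      ∈ Good m := by
    intro n
    refine ⟨pu (ts n), pv (ts n), pw (ts n), ?_, ?_, ?_, rfl⟩
    · rw [show (Matrix.of fun i l => pu (ts n) l i)
          = (Matrix.of fun i l => u l i) + (ts n) • 1 from hmat u (ts n)]
      rw [← det_perturb]
      exact isUnit_iff_ne_zero.mpr (hr1 n)
    · rw [show (Matrix.of fun j l => pv (ts n) l j)
          = (Matrix.of fun j l => v l j) + (ts n) • 1 from hmat v (ts n)]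
      rw [← det_perturb]
      exact isUnit_iff_ne_zero.mpr (hr2 n)
    · rw [show (Matrix.of fun k l => pw (ts n) l k)
          = (Matrix.of fun k l => w l k) + (ts n) • 1 from hmat w (ts n)]
      rw [← det_perturb]
      exact isUnit_iff_ne_zero.mpr (hr3 n)
  -- convergence
  have hcont : Continuous (fun t : ℂ =>
      (fun i j k => ∑ l, pu t l i * pv t l j * pw t l k : Tens m)) := by
    refine continuous_pi fun i => continuous_pi fun j => continuous_pi fun k => ?_
    refine continuous_finset_sum _ fun l _ => ?_
    have h1 : Continuous fun t : ℂ => pu t l i :=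
      continuous_const.add (continuous_id.mul continuous_const)
    have h2 : Continuous fun t : ℂ => pv t l j :=
      continuous_const.add (continuous_id.mul continuous_const)
    have h3 : Continuous fun t : ℂ => pw t l k :=
      continuous_const.add (continuous_id.mul continuous_const)
    exact (h1.mul h2).mul h3
  have hlim : Filter.Tendsto
      (fun n => (fun i j k => ∑ l, pu (ts n) l i * pv (ts n) l j * pw (ts n) l k : Tens m))
      Filter.atTop (nhds (fun i j k => ∑ l, u l i * v l j * w l k)) := by
    have := (hcont.tendsto 0).comp htend
    simpa [hpu, hpv, hpw, Function.comp_def] using this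
  exact mem_closure_of_tendsto hlim (Filter.Eventually.of_forall hgood)


lemma phi_continuous : Continuous fun q : Tens m × Esp m => Phi q.1 q.2 := by
  have hcoord2 : ∀ p : Fin 3 × Fin m × Fin m,
      Continuous fun q : Tens m × Esp m => q.2 p := by
    intro p
    exact (continuous_apply p).comp ((PiLp.continuous_ofLp 2 _).comp continuous_snd)
  have hcoord1 : ∀ i j k : Fin m, Continuous fun q : Tens m × Esp m => q.1 i j k := by
    intro i j k
    exact (continuous_apply k).comp ((continuous_apply j).comp
      ((continuous_apply i).comp continuous_fst))
  refine Continuous.prodMk ?_ ?_ <;>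
    refine continuous_pi fun i => continuous_pi fun j => continuous_pi fun k =>
      Continuous.sub (continuous_finset_sum _ fun l _ => ?_)
        (continuous_finset_sum _ fun l _ => ?_)
  · exact (hcoord2 (0, i, l)).mul (hcoord1 l j k)
  · exact (hcoord2 (1, j, l)).mul (hcoord1 i l k)
  · exact (hcoord2 (1, j, l)).mul (hcoord1 i l k)
  · exact (hcoord2 (2, k, l)).mul (hcoord1 i j l)

set_option maxHeartbeats 1000000 in
lemma stepD (T : Tens m) (G : Set (Tens m)) (hT : T ∈ closure G)
    (hG : ∀ S ∈ G, m ≤ Module.finrank ℂ ↥(LinearMap.ker (Phi S))) :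
    m ≤ Module.finrank ℂ ↥(LinearMap.ker (Phi T)) := by
  obtain ⟨x, hxG, hxlim⟩ := mem_closure_iff_seq_limit.mp hT
  have hfam : ∀ n : ℕ, ∃ v : Fin m → Esp m,
      (∀ i, v i ∈ LinearMap.ker (Phi (x n))) ∧
      (∀ i j, (inner ℂ (v i) (v j) : ℂ) = if i = j then 1 else 0) := by
    intro n
    have hK : m ≤ Module.finrank ℂ ↥(LinearMap.ker (Phi (x n))) := hG (x n) (hxG n)
    set K := LinearMap.ker (Phi (x n))
    let b := stdOrthonormalBasis ℂ K
    have hb := b.orthonormal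
    rw [orthonormal_iff_ite] at hb
    refine ⟨fun i => (b (Fin.castLE hK i) : Esp m), fun i => (b (Fin.castLE hK i)).2,
      fun i j => ?_⟩
    have h1 := hb (Fin.castLE hK i) (Fin.castLE hK j)
    rw [Submodule.coe_inner] at h1
    rw [h1]
    simp [Fin.castLE_inj]
  choose vs hvK hvI using hfam
  have hmem : ∀ n, vs n ∈ Set.pi Set.univ fun _ : Fin m => Metric.sphere (0 : Esp m) 1 := by
    intro n i _
    rw [mem_sphere_zero_iff_norm, @norm_eq_sqrt_re_inner ℂ]
    rw [hvI n i i]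
    simp
  have hcomp : IsCompact (Set.pi Set.univ fun _ : Fin m => Metric.sphere (0 : Esp m) 1) :=
    isCompact_univ_pi fun _ => isCompact_sphere 0 1
  obtain ⟨vl, hvl_mem, φ, hφ, hφlim⟩ := hcomp.tendsto_subseq hmem
  have hcoord : ∀ i, Filter.Tendsto (fun n => vs (φ n) i) Filter.atTop (nhds (vl i)) := by
    intro i
    exact ((continuous_apply i).tendsto vl).comp hφlim
  have hOn : Orthonormal ℂ vl := by
    rw [orthonormal_iff_ite]
    intro i j
    have h1 : Filter.Tendsto (fun n => (inner ℂ (vs (φ n) i) (vs (φ n) j) : ℂ))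
        Filter.atTop (nhds (inner ℂ (vl i) (vl j))) := (hcoord i).inner (hcoord j)
    have h2 : (fun n => (inner ℂ (vs (φ n) i) (vs (φ n) j) : ℂ))
        = fun _ => (if i = j then (1:ℂ) else 0) := funext fun n => hvI (φ n) i j
    rw [h2] at h1
    exact tendsto_nhds_unique h1 tendsto_const_nhds
  have hker : ∀ i, vl i ∈ LinearMap.ker (Phi T) := by
    intro i
    rw [LinearMap.mem_ker]
    have hseq : Filter.Tendsto (fun n => ((x (φ n)), vs (φ n) i)) Filter.atTop
        (nhds (T, vl i)) :=
      (hxlim.comp (hφ.tendsto_atTop)).prodMk_nhds (hcoord i)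
    have h1 : Filter.Tendsto (fun n => Phi (x (φ n)) (vs (φ n) i)) Filter.atTop
        (nhds (Phi T (vl i))) := by
      have h0 := (phi_continuous.tendsto (T, vl i)).comp hseq
      exact h0.congr fun n => rfl
    have h2 : (fun n => Phi (x (φ n)) (vs (φ n) i)) = fun _ => 0 :=
      funext fun n => LinearMap.mem_ker.mp (hvK (φ n) i)
    rw [h2] at h1
    exact tendsto_nhds_unique h1 tendsto_const_nhds
  let vK : Fin m → ↥(LinearMap.ker (Phi T)) := fun i => ⟨vl i, hker i⟩
  have hliK : LinearIndependent ℂ vK := by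
    apply LinearIndependent.of_comp (LinearMap.ker (Phi T)).subtype
    exact hOn.linearIndependent
  have := hliK.fintype_card_le_finrank
  simpa using this


end Eq111

/-- The 111-equations: a concise tensor `T ∈ ℂ^m⊗ℂ^m⊗ℂ^m` of minimal border
rank `m` (a limit of sums of `m` rank-one tensors) satisfies
`dim((T(A*)⊗A) ∩ (T(B*)⊗B) ∩ (T(C*)⊗C)) ≥ m`, the intersection taken
inside `A⊗B⊗C`. -/
theorem dim_triple_intersection_ge_of_minimal_border_rank {m : ℕ}
    (T : Fin m → Fin m → Fin m → ℂ) (hc : Concise T)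
    (hbr : T ∈ closure (rankAtMost m m)) :
    m ≤ Module.finrank ℂ
      ↥(LinearMap.range (phiA T) ⊓ LinearMap.range (phiB T) ⊓
        LinearMap.range (phiC T)) := by
  have hsub : closure (rankAtMost m m) ⊆ closure (Eq111.Good m) :=
    closure_minimal Eq111.rankAtMost_subset_closure_good isClosed_closure
  have hG : ∀ S ∈ Eq111.Good m, m ≤ Module.finrank ℂ ↥(LinearMap.ker (Eq111.Phi S)) := by
    rintro S ⟨u, v, w, hU, hV, hW, rfl⟩
    exact Eq111.stepB hU hV hW
  exact le_trans (Eq111.stepD T (Eq111.Good m) (hsub hbr) hG) (Eq111.stepA hc)
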